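/- (Stationary law of the classical geometric LPP front line on the cylinder.) Let p ∈ (0,1) and L ≥ 1. Define the Markov kernel M on B_L as follows: for b, c ∈ B_L, M_{b,c} = p^{|A|}·(1−p)^{k_b − |A|} if c is obtained from b by choosing a subset A of the local maxima of b and, for each i ∈ A, replacing (b_i, b_{i+1}) = (1,−1) by (c_i, c_{i+1}) = (−1,1) while keeping all other coordinates; and M_{b,c} = 0 if c is not of this form. Then the measure ν_L(b) = (1−p)^{−k_b} / Z with Z = ∑_{b∈B_L} (1−p)^{−k_b} is stationary for M: for all c ∈ B_L, ∑_{b∈B_L} (1−p)^{−k_b} · M_{b,c} = (1−p)^{−k_c}. -/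

import Mathlib

open scoped BigOperators

instance (L : ℕ) [NeZero L] : NeZero (2 * L) :=
  ⟨Nat.mul_ne_zero two_ne_zero (NeZero.ne L)⟩

/-- A bridge: a `±1`-valued function on `ℤ/nℤ` with zero sum. -/
def IsBridge (n : ℕ) [NeZero n] (b : ZMod n → ℤ) : Prop :=
  (∀ i, b i = 1 ∨ b i = -1) ∧ ∑ i : ZMod n, b i = 0

/-- The set of local maxima of a bridge. -/
def locMax {n : ℕ} [NeZero n] (b : ZMod n → ℤ) : Finset (ZMod n) :=
  Finset.univ.filter fun i => b i = 1 ∧ b (i + 1) = -1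

/-- The bridge obtained from `b` by flipping the local maxima in `A` into local minima. -/
def flipB {n : ℕ} [NeZero n] (A : Finset (ZMod n)) (b : ZMod n → ℤ) (i : ZMod n) : ℤ :=
  if i ∈ A then -1 else if i - 1 ∈ A then 1 else b i

/-- The Markov kernel of the front line of the classical geometric LPP on the cylinder:
each local maximum becomes a local minimum independently with probability `p`. -/
noncomputable def geoKer (p : ℝ) {n : ℕ} [NeZero n] (b c : ZMod n → ℤ) : ℝ :=
  ∑ A ∈ (locMax b).powerset,
    if c = flipB A b then p ^ A.card * (1 - p) ^ ((locMax b).card - A.card) else 0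

/-! ### Auxiliary definitions -/

/-- Local minima. -/
def locMin' {n : ℕ} [NeZero n] (c : ZMod n → ℤ) : Finset (ZMod n) :=
  Finset.univ.filter fun i => c i = -1 ∧ c (i + 1) = 1

/-- Unflip: turn the minima in `A` back into maxima. -/
def unflip {n : ℕ} [NeZero n] (A : Finset (ZMod n)) (c : ZMod n → ℤ) (i : ZMod n) : ℤ :=
  if i ∈ A then 1 else if i - 1 ∈ A then -1 else c i

lemma mem_locMax {n : ℕ} [NeZero n] {b : ZMod n → ℤ} {i : ZMod n} :
    i ∈ locMax b ↔ b i = 1 ∧ b (i + 1) = -1 := by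
  simp [locMax]

lemma mem_locMin' {n : ℕ} [NeZero n] {c : ZMod n → ℤ} {i : ZMod n} :
    i ∈ locMin' c ↔ c i = -1 ∧ c (i + 1) = 1 := by
  simp [locMin']

/-- Bridges are finite. -/
lemma bridge_finite (n : ℕ) [NeZero n] : Finite {b : ZMod n → ℤ // IsBridge n b} := by
  apply Finite.of_injective (fun b : {b : ZMod n → ℤ // IsBridge n b} =>
    (fun i => decide (b.1 i = 1) : ZMod n → Bool))
  intro a b hab
  ext i
  have h := congrFun hab i
  simp only [decide_eq_decide] at h
  rcases a.2.1 i with h1 | h1 <;> rcases b.2.1 i with h2 | h2 <;> simp_all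

/-- `#locMin = #locMax` for ±1-valued functions. -/
lemma card_locMin_eq_card_locMax {n : ℕ} [NeZero n] {c : ZMod n → ℤ}
    (h : ∀ i, c i = 1 ∨ c i = -1) : (locMin' c).card = (locMax c).card := by
  have key : ∀ i : ZMod n,
      (if i ∈ locMax c then (1:ℤ) else 0) - (if i ∈ locMin' c then 1 else 0)
        = (if c i = 1 then 1 else 0) - (if c (i+1) = 1 then 1 else 0) := by
    intro i
    simp only [mem_locMax, mem_locMin']
    rcases h i with h1 | h1 <;> rcases h (i+1) with h2 | h2 <;> norm_num [h1, h2]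
  have hsum : ∑ i : ZMod n, ((if i ∈ locMax c then (1:ℤ) else 0)
      - (if i ∈ locMin' c then 1 else 0)) = 0 := by
    rw [Finset.sum_congr rfl (fun i _ => key i), Finset.sum_sub_distrib]
    have e := Equiv.sum_comp (Equiv.addRight (1 : ZMod n))
      (fun j => if c j = 1 then (1:ℤ) else 0)
    simp only [Equiv.coe_addRight] at e
    rw [sub_eq_zero]; exact e.symm
  rw [Finset.sum_sub_distrib] at hsum
  have h1 : ∑ i : ZMod n, (if i ∈ locMax c then (1:ℤ) else 0) = (locMax c).card := by
    rw [Finset.sum_ite_mem, Finset.univ_inter, Finset.sum_const, nsmul_eq_mul, mul_one]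
  have h2 : ∑ i : ZMod n, (if i ∈ locMin' c then (1:ℤ) else 0) = (locMin' c).card := by
    rw [Finset.sum_ite_mem, Finset.univ_inter, Finset.sum_const, nsmul_eq_mul, mul_one]
  rw [h1, h2, sub_eq_zero] at hsum
  exact_mod_cast hsum.symm

section Bij
variable {n : ℕ} [NeZero n] {c : ZMod n → ℤ} {A : Finset (ZMod n)}

/-- Non-adjacency of minima in `A`. -/
lemma locMin'_nonadj (hA : A ⊆ locMin' c) :
    ∀ i ∈ A, i + 1 ∉ A ∧ i - 1 ∉ A := by
  intro i hi
  obtain ⟨h1, h2⟩ := mem_locMin'.mp (hA hi)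
  constructor
  · intro hcon
    exact absurd h2 (by rw [(mem_locMin'.mp (hA hcon)).1]; norm_num)
  · intro hcon
    have := (mem_locMin'.mp (hA hcon)).2
    rw [sub_add_cancel] at this
    rw [this] at h1; norm_num at h1

lemma unflip_forward (hc : IsBridge n c) (hA : A ⊆ locMin' c) :
    IsBridge n (unflip A c) ∧ A ⊆ locMax (unflip A c) ∧ c = flipB A (unflip A c) := by
  have nonadj := locMin'_nonadj hA
  have hmem : ∀ i ∈ A, c i = -1 ∧ c (i + 1) = 1 := fun i hi => mem_locMin'.mp (hA hi)
  refine ⟨⟨?_, ?_⟩, ?_, ?_⟩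
  · intro i
    unfold unflip
    split_ifs with h1 h2
    · left; rfl
    · right; rfl
    · exact hc.1 i
  · -- sum is zero
    have key : ∀ i : ZMod n, unflip A c i
        = c i + ((if i ∈ A then 2 else 0) - (if i - 1 ∈ A then 2 else 0)) := by
      intro i
      unfold unflip
      by_cases h1 : i ∈ A
      · have h3 : i - 1 ∉ A := (nonadj i h1).2
        simp [h1, h3, (hmem i h1).1]
      · by_cases h2 : i - 1 ∈ A
        · have := (hmem _ h2).2
          rw [sub_add_cancel] at this
          simp [h1, h2, this]
        · simp [h1, h2]
    rw [Finset.sum_congr rfl (fun i _ => key i), Finset.sum_add_distrib,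
      Finset.sum_sub_distrib, hc.2]
    have e := Equiv.sum_comp (Equiv.subRight (1 : ZMod n))
      (fun j => if j ∈ A then (2:ℤ) else 0)
    simp only [Equiv.subRight_apply] at e
    rw [e]; ring
  · -- A ⊆ locMax
    intro i hi
    rw [mem_locMax]
    constructor
    · unfold unflip; simp [hi]
    · have h1 : i + 1 ∉ A := (nonadj i hi).1
      unfold unflip; simp [h1, add_sub_cancel_right, hi]
  · -- c = flipB A (unflip A c)
    funext j
    unfold flipB unflip
    by_cases h1 : j ∈ A
    · simp [h1, (hmem j h1).1]
    · by_cases h2 : j - 1 ∈ A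
      · have := (hmem _ h2).2
        rw [sub_add_cancel] at this
        simp [h1, h2, this]
      · simp [h1, h2]

lemma unflip_backward {b : ZMod n → ℤ} (_hb : IsBridge n b)
    (hA : A ⊆ locMax b) (hflip : c = flipB A b) :
    A ⊆ locMin' c ∧ b = unflip A c := by
  have hmem : ∀ i ∈ A, b i = 1 ∧ b (i + 1) = -1 := fun i hi => mem_locMax.mp (hA hi)
  have nonadj : ∀ i ∈ A, i + 1 ∉ A ∧ i - 1 ∉ A := by
    intro i hi
    obtain ⟨h1, h2⟩ := hmem i hi
    constructor
    · intro hcon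
      rw [(hmem _ hcon).1] at h2; norm_num at h2
    · intro hcon
      have := (hmem _ hcon).2
      rw [sub_add_cancel] at this
      rw [this] at h1; norm_num at h1
  have hmin : A ⊆ locMin' c := by
    intro i hi
    rw [mem_locMin', hflip]
    unfold flipB
    constructor
    · simp [hi]
    · have h1 : i + 1 ∉ A := (nonadj i hi).1
      simp [h1, add_sub_cancel_right, hi]
  refine ⟨hmin, ?_⟩
  funext j
  unfold unflip
  by_cases h1 : j ∈ A
  · simp [h1, (hmem j h1).1]
  · by_cases h2 : j - 1 ∈ A
    · have := (hmem _ h2).2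
      rw [sub_add_cancel] at this
      simp [h1, h2, this]
    · simp only [h1, h2, if_false]
      rw [hflip]
      unfold flipB
      simp [h1, h2]

end Bij

lemma pow_balance {p : ℝ} (hq : (1:ℝ) - p ≠ 0) {a k : ℕ} (h : a ≤ k) :
    (1 - p) ^ (-(k:ℤ)) * (p ^ a * (1 - p) ^ (k - a)) = (p * (1 - p)⁻¹) ^ a := by
  set q := 1 - p with hqdef
  rw [mul_pow, inv_pow, ← zpow_natCast q a, ← zpow_neg, ← zpow_natCast q (k - a)]
  have h1 : ((k - a : ℕ) : ℤ) = (k:ℤ) - a := by push_cast [h]; ring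
  rw [h1, show q ^ (-(k:ℤ)) * (p ^ a * q ^ ((k:ℤ) - a))
      = p ^ a * (q ^ (-(k:ℤ)) * q ^ ((k:ℤ) - a)) by ring, ← zpow_add₀ hq]
  have h2 : -(k:ℤ) + ((k:ℤ) - a) = -a := by ring
  rw [h2]


/-- The measure `ν_L(b) ∝ (1−p)^{−k_b}` is stationary for the geometric LPP front-line
kernel on the cylinder. -/
theorem stmt_11 (p : ℝ) (hp : p ∈ Set.Ioo (0 : ℝ) 1) (L : ℕ) [NeZero L]
    (c : ZMod (2 * L) → ℤ) (hc : IsBridge (2 * L) c) :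
    ∑' b : {b : ZMod (2 * L) → ℤ // IsBridge (2 * L) b},
        (1 - p) ^ (-((locMax b.1).card : ℤ)) * geoKer p b.1 c
      = (1 - p) ^ (-((locMax c).card : ℤ)) := by
  obtain ⟨hp0, hp1⟩ := hp
  have hq : (1:ℝ) - p ≠ 0 := sub_ne_zero.mpr (ne_of_gt hp1)
  haveI := bridge_finite (2 * L)
  haveI : Fintype {b : ZMod (2 * L) → ℤ // IsBridge (2 * L) b} := Fintype.ofFinite _
  rw [tsum_fintype]
  set x := p * (1 - p)⁻¹ with hx
  have stepB : ∀ b : {b : ZMod (2 * L) → ℤ // IsBridge (2 * L) b},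
      (1 - p) ^ (-((locMax b.1).card : ℤ)) * geoKer p b.1 c
        = ∑ A ∈ (Finset.univ : Finset (ZMod (2 * L))).powerset,
            if A ⊆ locMax b.1 ∧ c = flipB A b.1 then x ^ A.card else 0 := by
    intro b
    rw [geoKer, Finset.mul_sum]
    have step1 : ∀ A ∈ (locMax b.1).powerset,
        (1 - p) ^ (-((locMax b.1).card:ℤ))
            * (if c = flipB A b.1 then
                p ^ A.card * (1 - p) ^ ((locMax b.1).card - A.card) else 0)
          = if c = flipB A b.1 then x ^ A.card else 0 := by
      intro A hA
      rw [Finset.mem_powerset] at hA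
      split_ifs
      · exact pow_balance hq (Finset.card_le_card hA)
      · exact mul_zero _
    rw [Finset.sum_congr rfl step1,
      ← Finset.inter_eq_right.mpr
        (show (locMax b.1).powerset ⊆ Finset.univ.powerset from
          Finset.powerset_mono.mpr (Finset.subset_univ _)),
      ← Finset.sum_ite_mem]
    apply Finset.sum_congr rfl
    intro A _
    by_cases h1 : A ⊆ locMax b.1
    · simp [h1, Finset.mem_powerset]
    · simp [h1, Finset.mem_powerset]
  rw [Finset.sum_congr rfl (fun b _ => stepB b), Finset.sum_comm]
  have stepD : ∀ A ∈ (Finset.univ : Finset (ZMod (2 * L))).powerset,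
      (∑ b : {b : ZMod (2 * L) → ℤ // IsBridge (2 * L) b},
          if A ⊆ locMax b.1 ∧ c = flipB A b.1 then x ^ A.card else 0)
        = if A ⊆ locMin' c then x ^ A.card else 0 := by
    intro A _
    by_cases hA : A ⊆ locMin' c
    · obtain ⟨hbridge, hmax, hflip⟩ := unflip_forward hc hA
      set b0 : {b : ZMod (2 * L) → ℤ // IsBridge (2 * L) b} := ⟨unflip A c, hbridge⟩
      have hiff : ∀ b : {b : ZMod (2 * L) → ℤ // IsBridge (2 * L) b},
          (A ⊆ locMax b.1 ∧ c = flipB A b.1) ↔ b = b0 := by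
        intro b
        constructor
        · rintro ⟨h1, h2⟩
          exact Subtype.ext (unflip_backward b.2 h1 h2).2
        · rintro rfl
          exact ⟨hmax, hflip⟩
      calc (∑ b : {b : ZMod (2 * L) → ℤ // IsBridge (2 * L) b},
              if A ⊆ locMax b.1 ∧ c = flipB A b.1 then x ^ A.card else 0)
          = ∑ b : {b : ZMod (2 * L) → ℤ // IsBridge (2 * L) b},
              if b = b0 then x ^ A.card else 0 := by
            apply Finset.sum_congr rfl
            intro b _
            exact if_congr (hiff b) rfl rfl
        _ = x ^ A.card := by
            rw [Finset.sum_ite_eq' Finset.univ b0 (fun _ => x ^ A.card)]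
            simp
        _ = _ := by rw [if_pos hA]
    · rw [if_neg hA]
      apply Finset.sum_eq_zero
      intro b _
      rw [if_neg]
      rintro ⟨h1, h2⟩
      exact hA (unflip_backward b.2 h1 h2).1
  rw [Finset.sum_congr rfl stepD]
  have stepE : ∑ A ∈ (Finset.univ : Finset (ZMod (2 * L))).powerset,
      (if A ⊆ locMin' c then x ^ A.card else 0)
        = ∑ A ∈ (locMin' c).powerset, x ^ A.card := by
    calc ∑ A ∈ (Finset.univ : Finset (ZMod (2 * L))).powerset,
          (if A ⊆ locMin' c then x ^ A.card else 0)
        = ∑ A ∈ (Finset.univ : Finset (ZMod (2 * L))).powerset,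
            (if A ∈ (locMin' c).powerset then x ^ A.card else 0) := by
          apply Finset.sum_congr rfl
          intro A _
          simp [Finset.mem_powerset]
      _ = ∑ A ∈ (Finset.univ : Finset (ZMod (2 * L))).powerset ∩ (locMin' c).powerset,
            x ^ A.card := Finset.sum_ite_mem _ _ _
      _ = _ := by
          rw [Finset.inter_eq_right.mpr (Finset.powerset_mono.mpr (Finset.subset_univ _))]
  rw [stepE]
  have stepF : ∑ A ∈ (locMin' c).powerset, x ^ A.card = (x + 1) ^ (locMin' c).card := by
    calc ∑ A ∈ (locMin' c).powerset, x ^ A.card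
        = ∑ A ∈ (locMin' c).powerset, (∏ _i ∈ A, x) * ∏ _i ∈ (locMin' c) \ A, (1:ℝ) := by
          apply Finset.sum_congr rfl
          intro A _
          rw [Finset.prod_const, Finset.prod_const, one_pow, mul_one]
      _ = ∏ _i ∈ locMin' c, (x + 1) := (Finset.prod_add _ _ _).symm
      _ = (x + 1) ^ (locMin' c).card := Finset.prod_const _
  rw [stepF]
  have hx1 : x + 1 = (1 - p)⁻¹ := by
    rw [hx]
    field_simp
    ring
  rw [hx1, card_locMin_eq_card_locMax hc.1, zpow_neg, zpow_natCast, ← inv_pow]
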